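/- Let μ be a finite Borel measure on ℂ, K a separable complex Hilbert space, and S a countable subset of the Bochner space L²(μ; K) whose linear span is dense in L²(μ; K). Fix for each h ∈ S a representative (also denoted h). Then for μ-almost every z ∈ ℂ, the linear span of { h(z) : h ∈ S } is dense in K. -/

import Mathlib

open MeasureTheory
open scoped ENNReal

private lemma span_mem_aux {K : Type*} [NormedAddCommGroup K] [InnerProductSpace ℂ K]
    [CompleteSpace K]
    (μ : Measure ℂ) [IsFiniteMeasure μ]
    {ι : Type*} [Countable ι] (h : ι → ℂ → K)
    (hmem : ∀ i, MemLp (h i) 2 μ)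
    (g : Lp K 2 μ)
    (hg : g ∈ Submodule.span ℂ (Set.range fun i => (hmem i).toLp (h i))) :
    ∀ᵐ z ∂μ, (g : ℂ → K) z ∈ Submodule.span ℂ (Set.range fun i => h i z) := by
  induction hg using Submodule.span_induction with
  | mem x hx =>
    obtain ⟨i, rfl⟩ := hx
    filter_upwards [(hmem i).coeFn_toLp] with z hz
    rw [hz]
    exact Submodule.subset_span ⟨i, rfl⟩
  | zero =>
    filter_upwards [Lp.coeFn_zero K 2 μ] with z hz
    rw [hz]; exact Submodule.zero_mem _
  | add a b _ _ ha hb =>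
    filter_upwards [Lp.coeFn_add a b, ha, hb] with z hz hza hzb
    rw [hz]; exact Submodule.add_mem _ hza hzb
  | smul c a _ ha =>
    filter_upwards [Lp.coeFn_smul c a, ha] with z hz hza
    rw [hz]; exact Submodule.smul_mem _ c hza

private lemma mem_closure_aux {K : Type*} [NormedAddCommGroup K] [InnerProductSpace ℂ K]
    [CompleteSpace K]
    (μ : Measure ℂ) [IsFiniteMeasure μ]
    {ι : Type*} [Countable ι] (h : ι → ℂ → K)
    (hmem : ∀ i, MemLp (h i) 2 μ)
    (hdense :
      (Submodule.span ℂ (Set.range fun i => (hmem i).toLp (h i))).topologicalClosure = ⊤)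
    (e : K) :
    ∀ᵐ z ∂μ, e ∈ (Submodule.span ℂ (Set.range fun i => h i z)).topologicalClosure := by
  have hconst : MemLp (fun _ : ℂ => e) 2 μ := memLp_const e
  set c : Lp K 2 μ := hconst.toLp _ with hc
  have hcmem : c ∈ (Submodule.span ℂ (Set.range fun i => (hmem i).toLp (h i))).topologicalClosure := by
    rw [hdense]; trivial
  have hcl : c ∈ closure ((Submodule.span ℂ (Set.range fun i => (hmem i).toLp (h i)) : Submodule ℂ (Lp K 2 μ)) : Set (Lp K 2 μ)) := hcmem
  obtain ⟨g, hgmem, hgtend⟩ := mem_closure_iff_seq_limit.mp hcl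
  have htm : TendstoInMeasure μ (fun n => ((g n : Lp K 2 μ) : ℂ → K)) Filter.atTop
      ((c : ℂ → K)) := tendstoInMeasure_of_tendsto_Lp hgtend
  obtain ⟨ns, _, hae⟩ := htm.exists_seq_tendsto_ae
  have hspan : ∀ᵐ z ∂μ, ∀ n, ((g (ns n) : Lp K 2 μ) : ℂ → K) z ∈
      Submodule.span ℂ (Set.range fun i => h i z) := by
    rw [MeasureTheory.ae_all_iff]
    exact fun n => span_mem_aux μ h hmem _ (hgmem (ns n))
  filter_upwards [hae, hspan, hconst.coeFn_toLp] with z hz hzspan hzc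
  rw [hzc] at hz
  have : e ∈ closure ((Submodule.span ℂ (Set.range fun i => h i z) : Submodule ℂ K) : Set K) :=
    mem_closure_of_tendsto hz (Filter.Eventually.of_forall hzspan)
  exact this

/-- (Kriete's lemma.) Let `μ` be a finite Borel measure on `ℂ`, `K` a separable complex
Hilbert space and `(h i)` a countable family of functions in `L²(μ; K)` whose span is dense
in `L²(μ; K)`. Then for μ-almost every `z ∈ ℂ`, the span of `{h i z}` is dense in `K`. -/
theorem stmt_14 {K : Type*} [NormedAddCommGroup K] [InnerProductSpace ℂ K] [CompleteSpace K]
    [TopologicalSpace.SeparableSpace K]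
    (μ : Measure ℂ) [IsFiniteMeasure μ]
    {ι : Type*} [Countable ι] (h : ι → ℂ → K)
    (hmem : ∀ i, MemLp (h i) 2 μ)
    (hdense :
      (Submodule.span ℂ (Set.range fun i => (hmem i).toLp (h i))).topologicalClosure = ⊤) :
    ∀ᵐ z ∂μ, (Submodule.span ℂ (Set.range fun i => h i z)).topologicalClosure = ⊤ := by
  have : Nonempty K := ⟨0⟩
  have hall : ∀ᵐ z ∂μ, ∀ n : ℕ, TopologicalSpace.denseSeq K n ∈
      (Submodule.span ℂ (Set.range fun i => h i z)).topologicalClosure := by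
    rw [MeasureTheory.ae_all_iff]
    exact fun n => mem_closure_aux μ h hmem hdense _
  filter_upwards [hall] with z hz
  rw [Submodule.eq_top_iff']
  intro x
  have hd : DenseRange (TopologicalSpace.denseSeq K) := TopologicalSpace.denseRange_denseSeq K
  have hsub : Set.range (TopologicalSpace.denseSeq K) ⊆
      ((Submodule.span ℂ (Set.range fun i => h i z)).topologicalClosure : Set K) := by
    rintro _ ⟨n, rfl⟩; exact hz n
  have : closure (Set.range (TopologicalSpace.denseSeq K)) ⊆
      ((Submodule.span ℂ (Set.range fun i => h i z)).topologicalClosure : Set K) :=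
    closure_minimal hsub (Submodule.isClosed_topologicalClosure _)
  exact this (hd x)
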